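/- Let (X,G) be a minimal topologically free dynamical system and let H be a finite almost normal subgroup of G. Then for every x ∈ X and every g ∈ G, the intersection G_x ∩ gHg⁻¹ is the trivial group {1}. -/

import Mathlib

/-- The conjugate subgroup `g H g⁻¹`. -/
def conjSubgroup {G : Type*} [Group G] (g : G) (H : Subgroup G) : Subgroup G :=
  Subgroup.map (MulAut.conj g).toMonoidHom H

lemma mem_conjSubgroup {G : Type*} [Group G] (g : G) (H : Subgroup G) (s : G) :
    s ∈ conjSubgroup g H ↔ ∃ a ∈ H, g * a * g⁻¹ = s := by
  simp [conjSubgroup, Subgroup.mem_map]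

lemma conjSubgroup_mul {G : Type*} [Group G] (a b : G) (H : Subgroup G) :
    conjSubgroup (a * b) H = conjSubgroup a (conjSubgroup b H) := by
  ext x
  simp only [mem_conjSubgroup]
  constructor
  · rintro ⟨h, hh, rfl⟩
    exact ⟨b * h * b⁻¹, ⟨h, hh, rfl⟩, by group⟩
  · rintro ⟨y, ⟨h, hh, rfl⟩, rfl⟩
    exact ⟨h, hh, by group⟩

lemma conjSubgroup_of_mem_normalizer {G : Type*} [Group G] {n : G} {H : Subgroup G}
    (hn : n ∈ Subgroup.normalizer (H : Set G)) : conjSubgroup n H = H := by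
  ext x
  simp only [mem_conjSubgroup]
  rw [Subgroup.mem_normalizer_iff] at hn
  constructor
  · rintro ⟨a, ha, rfl⟩
    exact (hn a).mp ha
  · intro hx
    refine ⟨n⁻¹ * x * n, ?_, by group⟩
    have := (hn (n⁻¹ * x * n)).symm
    rw [show n * (n⁻¹ * x * n) * n⁻¹ = x by group] at this
    exact this.mp hx

/-- If `(X,G)` is a minimal topologically free dynamical system and `H` is a finite almost normal
subgroup of `G`, then `G_x ∩ g H g⁻¹ = {1}` for every `x ∈ X` and `g ∈ G`. -/
theorem stmt12 {G X : Type*} [Group G] [Countable G]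
    [TopologicalSpace X] [CompactSpace X] [T2Space X]
    [MulAction G X] [ContinuousConstSMul G X]
    (hmin : ∀ x : X, Dense (MulAction.orbit G x))
    (htopfree : {x : X | MulAction.stabilizer G x = ⊥} ∈ residual X)
    (H : Subgroup G) (hfin : (H : Set G).Finite) (hAN : (Subgroup.normalizer (H : Set G)).FiniteIndex) :
    ∀ (x : X) (g : G), MulAction.stabilizer G x ⊓ conjSubgroup g H = ⊥ := by
  intro x g
  rw [eq_bot_iff]
  rintro h ⟨hstab, hconj⟩
  simp only [Subgroup.mem_bot]
  by_contra hne
  -- the union of all conjugates of H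
  set N := Subgroup.normalizer (H : Set G)
  set S : Set G := ⋃ q : G ⧸ N, ((conjSubgroup q.out H : Subgroup G) : Set G) with hS
  have hSfin : S.Finite := by
    apply Set.finite_iUnion
    intro q
    simpa [conjSubgroup] using hfin.image _
  have hmemS : ∀ (m : G) (s : G), s ∈ conjSubgroup m H → s ∈ S := by
    intro m s hs
    have hq : (QuotientGroup.mk m : G ⧸ N).out⁻¹ * m ∈ N := by
      rw [← QuotientGroup.eq]
      simp
    have : conjSubgroup m H = conjSubgroup (QuotientGroup.mk m : G ⧸ N).out H := by
      have := conjSubgroup_mul (QuotientGroup.mk m : G ⧸ N).out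
        ((QuotientGroup.mk m : G ⧸ N).out⁻¹ * m) H
      rw [conjSubgroup_of_mem_normalizer hq] at this
      rw [← this, mul_inv_cancel_left]
    rw [this] at hs
    exact Set.mem_iUnion.mpr ⟨QuotientGroup.mk m, hs⟩
  -- the "bad" set
  set F : Set X := ⋃ s ∈ S \ {1}, {y : X | s • y = y} with hF
  have hFclosed : IsClosed F := by
    apply Set.Finite.isClosed_biUnion hSfin.diff
    intro s _
    exact isClosed_eq (continuous_const_smul s) continuous_id
  have hFc_res : Fᶜ ∈ residual X := by
    apply Filter.mem_of_superset htopfree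
    intro y hy
    simp only [Set.mem_compl_iff, hF, Set.mem_iUnion]
    rintro ⟨s, ⟨⟨hsS, hs1⟩, hsy⟩⟩
    apply hs1
    have : s ∈ MulAction.stabilizer G y := hsy
    rw [hy] at this
    simpa using this
  have hFc_dense : Dense Fᶜ := dense_of_mem_residual hFc_res
  -- F is invariant and contains the orbit of x
  have horb : MulAction.orbit G x ⊆ F := by
    rintro _ ⟨k, rfl⟩
    refine Set.mem_biUnion (s := S \ {1}) ⟨hmemS (k * g) (k * h * k⁻¹) ?_, ?_⟩ ?_
    · have hconj' : h ∈ conjSubgroup g H := hconj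
      rw [mem_conjSubgroup] at hconj'
      rw [mem_conjSubgroup]
      obtain ⟨a, ha, hae⟩ := hconj'
      subst hae
      exact ⟨a, ha, by group⟩
    · simp only [Set.mem_singleton_iff]
      intro hc
      exact hne (by
        have : k * h * k⁻¹ = 1 := hc
        have := congrArg (fun z => k⁻¹ * z * k) this
        simpa [mul_assoc] using this)
    · show (k * h * k⁻¹) • (k • x) = k • x
      have hx : h • x = x := hstab
      rw [mul_smul, mul_smul, inv_smul_smul, hx]
  have hFuniv : F = Set.univ := by
    have h1 := (hmin x).closure_eq
    apply Set.eq_univ_of_univ_subset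
    calc Set.univ = closure (MulAction.orbit G x) := h1.symm
    _ ⊆ closure F := closure_mono horb
    _ = F := hFclosed.closure_eq
  have hne2 : Nonempty X := ⟨x⟩
  have : (Fᶜ : Set X).Nonempty := hFc_dense.nonempty
  rw [hFuniv] at this
  simp at this
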